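/- arXiv:math/0404353 — 2 statements merged into one kernel-verified Lean document; each statement's English description precedes it below -/
import Mathlib

section
/- Let η be a composition of size n and γ ∈ ℤ^n with Σγ_i = 0. Then K_{Φ(η)}(γ | q) = K_{Φ(η⃖)}(−γ⃖ | q), where η⃖ and γ⃖ denote the reversed sequences. -/
open scoped Classical

noncomputable section

/-- Partial sum `S η r = η_1 + ⋯ + η_r`. -/
def S (η : List ℕ) (r : ℕ) : ℕ := (η.take r).sum

/-- The set `Φ(η)` of pairs (0-indexed) `(i,j)` with `i < S η r ≤ j` for some `1 ≤ r ≤ l(η)`. -/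
def Phi (η : List ℕ) : Finset (ℕ × ℕ) :=
  (Finset.range η.sum ×ˢ Finset.range η.sum).filter
    (fun p => ∃ r ∈ Finset.Icc 1 η.length, p.1 < S η r ∧ S η r ≤ p.2)

/-- Coefficient of `q^d` in the parabolic `q`-Kostant partition function `K_{Φ(η)}(γ|q)`:
the number of non-negative integer arrays supported on `Φ(η)` with net row sums `γ`
and total sum of entries `d`. -/
def KCoeff (η : List ℕ) (γ : ℕ → ℤ) (d : ℕ) : ℕ :=
  Nat.card {m : ℕ × ℕ → ℕ //
    (∀ p, p ∉ Phi η → m p = 0) ∧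
    (∀ i ∈ Finset.range η.sum,
      (∑ j ∈ Finset.range η.sum, (m (i, j) : ℤ)) -
        (∑ j ∈ Finset.range η.sum, (m (j, i) : ℤ)) = γ i) ∧
    (∑ p ∈ Phi η, m p) = d}

/-- The parabolic Kostant partition function `K_{Φ(η)}(γ)` (value at `q = 1`). -/
def KNum (η : List ℕ) (γ : ℕ → ℤ) : ℕ :=
  Nat.card {m : ℕ × ℕ → ℕ //
    (∀ p, p ∉ Phi η → m p = 0) ∧
    (∀ i ∈ Finset.range η.sum,
      (∑ j ∈ Finset.range η.sum, (m (i, j) : ℤ)) -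
        (∑ j ∈ Finset.range η.sum, (m (j, i) : ℤ)) = γ i)}

/-- Coefficient of `q^d` in the parabolic Kostka polynomial
`K_{λμη}(q) = Σ_w (−1)^{ℓ(w)} K_{Φ(η)}(w(λ+δ) − μ − δ | q)`, where `δ = (n−1,…,1,0)`. -/
def ParKostkaCoeff (η : List ℕ) (lam mu : ℕ → ℤ) (d : ℕ) : ℤ :=
  ∑ w : Equiv.Perm (Fin η.sum),
    (Equiv.Perm.sign w : ℤ) *
      (KCoeff η
        (fun i =>
          (if h : i < η.sum then
              lam ((w⁻¹ ⟨i, h⟩ : Fin η.sum) : ℕ) +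
                ((η.sum : ℤ) - 1 - ((w⁻¹ ⟨i, h⟩ : Fin η.sum) : ℕ))
            else 0) - mu i - ((η.sum : ℤ) - 1 - i)) d : ℤ)

/-- The parabolic Kostka number `K_{λμη}(1)`. -/
def ParKostkaNum (η : List ℕ) (lam mu : ℕ → ℤ) : ℤ :=
  ∑ w : Equiv.Perm (Fin η.sum),
    (Equiv.Perm.sign w : ℤ) *
      (KNum η
        (fun i =>
          (if h : i < η.sum then
              lam ((w⁻¹ ⟨i, h⟩ : Fin η.sum) : ℕ) +
                ((η.sum : ℤ) - 1 - ((w⁻¹ ⟨i, h⟩ : Fin η.sum) : ℕ))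
            else 0) - mu i - ((η.sum : ℤ) - 1 - i)) : ℤ)

end

noncomputable section Aux

def revMap (η : List ℕ) (m : ℕ × ℕ → ℕ) : ℕ × ℕ → ℕ :=
  fun p => if p.1 < η.sum ∧ p.2 < η.sum then m (η.sum - 1 - p.2, η.sum - 1 - p.1) else 0

lemma S_le (η : List ℕ) (s : ℕ) : S η s ≤ η.sum := by
  have := η.sum_take_add_sum_drop s
  unfold S; omega

lemma S_rev (η : List ℕ) (r : ℕ) :
    S η.reverse r + S η (η.length - r) = η.sum := by
  unfold S
  rw [List.take_reverse, List.sum_reverse]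
  have := η.sum_take_add_sum_drop (η.length - r)
  omega

lemma S_len (η : List ℕ) : S η η.length = η.sum := by simp [S]

lemma Phi_bounds {η : List ℕ} {p : ℕ × ℕ} (hp : p ∈ Phi η) :
    p.1 < η.sum ∧ p.2 < η.sum := by
  simp only [Phi, Finset.mem_filter, Finset.mem_product, Finset.mem_range] at hp
  exact hp.1

lemma Phi_dir (η : List ℕ) (a b : ℕ) (hm : (a, b) ∈ Phi η) :
    (η.sum - 1 - b, η.sum - 1 - a) ∈ Phi η.reverse := by
  simp only [Phi, Finset.mem_filter, Finset.mem_product, Finset.mem_range, Finset.mem_Icc,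
    List.sum_reverse, List.length_reverse] at hm ⊢
  obtain ⟨⟨ha, hb⟩, s, ⟨hs1, hs2⟩, hs3, hs4⟩ := hm
  have hlen := S_len η
  have hslt : s < η.length := by
    rcases Nat.lt_or_ge s η.length with h | h
    · exact h
    · exfalso
      have : s = η.length := le_antisymm hs2 h
      subst this; omega
  have hrev := S_rev η (η.length - s)
  rw [show η.length - (η.length - s) = s by omega] at hrev
  have hle := S_le η s
  exact ⟨⟨by omega, by omega⟩, η.length - s, ⟨by omega, by omega⟩, by omega, by omega⟩

lemma Phi_dir' (η : List ℕ) (a b : ℕ) (ha : a < η.sum) (hb : b < η.sum)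
    (hm : (a, b) ∈ Phi η.reverse) : (η.sum - 1 - b, η.sum - 1 - a) ∈ Phi η := by
  have := Phi_dir η.reverse _ _ hm
  simp only [List.sum_reverse, List.reverse_reverse] at this
  exact this

lemma revMap_revMap (η : List ℕ) (m : ℕ × ℕ → ℕ) (h1 : ∀ p, p ∉ Phi η → m p = 0) :
    revMap η.reverse (revMap η m) = m := by
  funext p
  obtain ⟨a, b⟩ := p
  by_cases hab : a < η.sum ∧ b < η.sum
  · obtain ⟨ha, hb⟩ := hab
    have h1' : η.sum - 1 - b < η.sum ∧ η.sum - 1 - a < η.sum := by omega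
    have e1 : η.sum - 1 - (η.sum - 1 - a) = a := by omega
    have e2 : η.sum - 1 - (η.sum - 1 - b) = b := by omega
    simp [revMap, List.sum_reverse, ha, hb, h1', e1, e2]
  · have hni : (a, b) ∉ Phi η := by
      intro hmem
      exact hab ⟨(Phi_bounds hmem).1, (Phi_bounds hmem).2⟩
    simp [revMap, List.sum_reverse, hab, h1 _ hni]

lemma sum_rev (η : List ℕ) (m : ℕ × ℕ → ℕ) :
    ∑ p ∈ Phi η.reverse, revMap η m p = ∑ p ∈ Phi η, m p := by
  refine Finset.sum_nbij' (i := fun p => (η.sum - 1 - p.2, η.sum - 1 - p.1))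
    (j := fun p => (η.sum - 1 - p.2, η.sum - 1 - p.1)) ?_ ?_ ?_ ?_ ?_
  · intro p hp
    have hb := Phi_bounds hp
    rw [List.sum_reverse] at hb
    exact Phi_dir' η p.1 p.2 hb.1 hb.2 hp
  · intro p hp
    exact Phi_dir η p.1 p.2 hp
  · intro p hp
    have hb := Phi_bounds hp
    rw [List.sum_reverse] at hb
    obtain ⟨h1, h2⟩ := hb
    simp only
    ext <;> simp <;> omega
  · intro p hp
    have hb := Phi_bounds hp
    obtain ⟨h1, h2⟩ := hb
    simp only
    ext <;> simp <;> omega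
  · intro p hp
    have hb := Phi_bounds hp
    rw [List.sum_reverse] at hb
    simp [revMap, hb.1, hb.2]

lemma row_rev (η : List ℕ) (m : ℕ × ℕ → ℕ) (i : ℕ) (hi : i < η.sum) :
    (∑ j ∈ Finset.range η.sum, (revMap η m (i, j) : ℤ)) =
      ∑ j ∈ Finset.range η.sum, (m (j, η.sum - 1 - i) : ℤ) := by
  rw [← Finset.sum_range_reflect (fun j => (m (j, η.sum - 1 - i) : ℤ)) η.sum]
  refine Finset.sum_congr rfl fun j hj => ?_
  simp only [Finset.mem_range] at hj
  simp [revMap, hi, hj]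

lemma col_rev (η : List ℕ) (m : ℕ × ℕ → ℕ) (i : ℕ) (hi : i < η.sum) :
    (∑ j ∈ Finset.range η.sum, (revMap η m (j, i) : ℤ)) =
      ∑ j ∈ Finset.range η.sum, (m (η.sum - 1 - i, j) : ℤ) := by
  rw [← Finset.sum_range_reflect (fun j => (m (η.sum - 1 - i, j) : ℤ)) η.sum]
  refine Finset.sum_congr rfl fun j hj => ?_
  simp only [Finset.mem_range] at hj
  simp [revMap, hi, hj]

lemma revMap_spec (η : List ℕ) (γ : ℕ → ℤ) (d : ℕ) (m : ℕ × ℕ → ℕ)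
    (h1 : ∀ p, p ∉ Phi η → m p = 0)
    (h2 : ∀ i ∈ Finset.range η.sum,
      (∑ j ∈ Finset.range η.sum, (m (i, j) : ℤ)) -
        (∑ j ∈ Finset.range η.sum, (m (j, i) : ℤ)) = γ i)
    (h3 : (∑ p ∈ Phi η, m p) = d) :
    (∀ p, p ∉ Phi η.reverse → revMap η m p = 0) ∧
    (∀ i ∈ Finset.range η.reverse.sum,
      (∑ j ∈ Finset.range η.reverse.sum, (revMap η m (i, j) : ℤ)) -
        (∑ j ∈ Finset.range η.reverse.sum, (revMap η m (j, i) : ℤ)) =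
          - γ (η.sum - 1 - i)) ∧
    (∑ p ∈ Phi η.reverse, revMap η m p) = d := by
  refine ⟨?_, ?_, by rw [sum_rev η m, h3]⟩
  · intro p hp
    by_cases hab : p.1 < η.sum ∧ p.2 < η.sum
    · have : (η.sum - 1 - p.2, η.sum - 1 - p.1) ∉ Phi η := by
        intro hmem
        apply hp
        have := Phi_dir η _ _ hmem
        rw [show η.sum - 1 - (η.sum - 1 - p.1) = p.1 by omega,
            show η.sum - 1 - (η.sum - 1 - p.2) = p.2 by omega] at this
        exact this
      simp [revMap, hab, h1 _ this]
    · simp [revMap, hab]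
  · intro i hi
    simp only [List.sum_reverse, Finset.mem_range] at hi ⊢
    rw [row_rev η m i hi, col_rev η m i hi]
    have := h2 (η.sum - 1 - i) (by simp only [Finset.mem_range]; omega)
    omega

end Aux

/-- `K_{Φ(η)}(γ|q) = K_{Φ(η⃖)}(−γ⃖|q)`, where `η⃖`, `γ⃖` are the reversed
sequences; stated coefficient-wise in `q`. -/
theorem stmt3 (η : List ℕ) (γ : ℕ → ℤ)
    (h : ∑ i ∈ Finset.range η.sum, γ i = 0) (d : ℕ) :
    KCoeff η γ d = KCoeff η.reverse (fun i => - γ (η.sum - 1 - i)) d := by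
  apply Nat.card_congr
  refine ⟨fun m => ⟨revMap η m.1, ?_⟩, fun m => ⟨revMap η.reverse m.1, ?_⟩, ?_, ?_⟩
  · obtain ⟨h1, h2, h3⟩ := m.2
    exact revMap_spec η γ d m.1 h1 h2 h3
  · obtain ⟨h1, h2, h3⟩ := m.2
    have hs := revMap_spec η.reverse (fun i => - γ (η.sum - 1 - i)) d m.1 h1 h2 h3
    rw [List.reverse_reverse] at hs
    refine ⟨hs.1, ?_, hs.2.2⟩
    intro i hi
    rw [hs.2.1 i hi]
    simp only [Finset.mem_range] at hi
    simp only [List.sum_reverse]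
    rw [show η.sum - 1 - (η.sum - 1 - i) = i by omega]
    ring
  · intro m
    exact Subtype.ext (revMap_revMap η m.1 m.2.1)
  · intro m
    have := revMap_revMap η.reverse m.1 m.2.1
    rw [List.reverse_reverse] at this
    exact Subtype.ext this
end

section
/- Let η = (η_1,…,η_p) with p ≥ 2, set η̃ = (η_1,…,η_{p-1}) and r = η_1+⋯+η_{p-1}. If γ ∈ ℤ^n (n = |η|) with Σγ_i = 0 lies in the dominant chamber (γ_1 ≥ ⋯ ≥ γ_{n-1} ≥ 0) — in particular γ_{r+1} = ⋯ = γ_{n-1} = 0 and γ_n ≤ 0 — then K_{Φ(η)}(γ | q) = q^{−γ_n} Σ_β K_{Φ(η̃)}((γ_1 − β_1, …, γ_r − β_r) | q), where the sum runs over β ∈ ℤ_{≥0}^r with |β| = −γ_n. (Only the last coordinate contributes since γ_{r+1}=⋯=γ_{n-1}=0.) -/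
open scoped Classical

lemma S_le_sum (l : List ℕ) (s : ℕ) : S l s ≤ l.sum := by
  rw [S, ← List.sum_take_add_sum_drop l s]; omega

lemma S_mono (l : List ℕ) {s t : ℕ} (h : s ≤ t) : S l s ≤ S l t := by
  rw [S, S, ← min_eq_left h, ← List.take_take]
  exact S_le_sum (l.take t) s

lemma S_dropLast (l : List ℕ) {s : ℕ} (hs : s ≤ l.length - 1) : S l.dropLast s = S l s := by
  rw [S, S, List.dropLast_eq_take, List.take_take, min_eq_left hs]

lemma S_full (l : List ℕ) : S l l.length = l.sum := by
  rw [S, List.take_length]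

lemma S_pred (l : List ℕ) : S l (l.length - 1) = l.dropLast.sum := by
  rw [S, List.dropLast_eq_take]

lemma dropLast_sum_le (l : List ℕ) : l.dropLast.sum ≤ l.sum := by
  rw [← S_pred]; exact S_le_sum _ _

lemma mem_Phi (η : List ℕ) (q : ℕ × ℕ) :
    q ∈ Phi η ↔ (q.1 < η.sum ∧ q.2 < η.sum) ∧
      ∃ s, (1 ≤ s ∧ s ≤ η.length) ∧ q.1 < S η s ∧ S η s ≤ q.2 := by
  simp only [Phi, Finset.mem_filter, Finset.mem_product, Finset.mem_range, Finset.mem_Icc]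

lemma mem_Phi_iff (η : List ℕ) (hp : 2 ≤ η.length) (i j : ℕ) :
    (i, j) ∈ Phi η ↔
      ((i, j) ∈ Phi η.dropLast ∧ j < η.dropLast.sum) ∨
      (i < η.dropLast.sum ∧ η.dropLast.sum ≤ j ∧ j < η.sum) := by
  have hrn : η.dropLast.sum ≤ η.sum := dropLast_sum_le η
  have hlen : η.dropLast.length = η.length - 1 := List.length_dropLast
  have hsum : η.dropLast.sum = S η (η.length - 1) := (S_pred η).symm
  constructor
  · rintro h
    rw [mem_Phi] at h
    obtain ⟨⟨hi, hj⟩, s, hs, h1, h2⟩ := h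
    have hsp : s ≤ η.length - 1 := by
      rcases Nat.lt_or_ge s η.length with h | h
      · omega
      · exfalso
        have : s = η.length := le_antisymm hs.2 h
        rw [this, S_full] at h2; omega
    have hS : S η.dropLast s = S η s := S_dropLast η hsp
    have hSr : S η s ≤ η.dropLast.sum := by rw [hsum]; exact S_mono η hsp
    rcases Nat.lt_or_ge j η.dropLast.sum with hjr | hjr
    · left
      refine ⟨?_, hjr⟩
      rw [mem_Phi]
      exact ⟨⟨lt_of_lt_of_le h1 hSr, hjr⟩, s, ⟨hs.1, by omega⟩, by rw [hS]; exact h1,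
        by rw [hS]; exact h2⟩
    · right
      exact ⟨lt_of_lt_of_le h1 hSr, hjr, hj⟩
  · rintro (⟨h, hjr⟩ | ⟨hir, hjr, hj⟩)
    · rw [mem_Phi] at h ⊢
      obtain ⟨⟨hi, hj⟩, s, hs, h1, h2⟩ := h
      have hsp : s ≤ η.length - 1 := by omega
      have hS : S η.dropLast s = S η s := S_dropLast η hsp
      exact ⟨⟨by omega, by omega⟩, s, ⟨hs.1, by omega⟩, by rw [← hS]; exact h1,
        by rw [← hS]; exact h2⟩
    · rw [mem_Phi]
      refine ⟨⟨by omega, hj⟩, η.length - 1, ⟨by omega, by omega⟩, ?_, ?_⟩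
      · rw [← hsum]; exact hir
      · rw [← hsum]; exact hjr

lemma Phi_fst_lt {η : List ℕ} (hp : 2 ≤ η.length) {q : ℕ × ℕ} (h : q ∈ Phi η) :
    q.1 < η.dropLast.sum := by
  obtain ⟨i, j⟩ := q
  rcases (mem_Phi_iff η hp i j).1 h with ⟨h, _⟩ | ⟨h, _⟩
  · exact ((mem_Phi _ _).1 h).1.1
  · exact h

lemma Phi_dropLast_subset {η : List ℕ} (hp : 2 ≤ η.length) {q : ℕ × ℕ}
    (h : q ∈ Phi η.dropLast) : q ∈ Phi η := by
  obtain ⟨i, j⟩ := q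
  exact (mem_Phi_iff η hp i j).2 (Or.inl ⟨h, ((mem_Phi _ _).1 h).1.2⟩)

lemma natCard_sigma {ι : Type*} [Fintype ι] (B : ι → Type*) [∀ i, Finite (B i)] :
    Nat.card ((i : ι) × B i) = ∑ i, Nat.card (B i) := by
  letI : ∀ i, Fintype (B i) := fun i => Fintype.ofFinite _
  simp [Nat.card_eq_fintype_card, Fintype.card_sigma]

lemma finite_K (s : Finset (ℕ × ℕ)) (P : (ℕ × ℕ → ℕ) → Prop) (d : ℕ) :
    Finite {m : ℕ × ℕ → ℕ // (∀ p, p ∉ s → m p = 0) ∧ P m ∧ (∑ p ∈ s, m p) = d} := by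
  have hb : ∀ (m : {m : ℕ × ℕ → ℕ // (∀ p, p ∉ s → m p = 0) ∧ P m ∧ (∑ p ∈ s, m p) = d})
      (p : s), m.1 p.1 < d + 1 := by
    intro m p
    have h1 : m.1 p.1 ≤ ∑ q ∈ s, m.1 q :=
      Finset.single_le_sum (fun q _ => Nat.zero_le _) p.2
    have := m.2.2.2
    omega
  apply Finite.of_injective (fun m => (fun p : s => (⟨m.1 p.1, hb m p⟩ : Fin (d + 1))))
  intro m1 m2 h
  apply Subtype.ext; funext q
  by_cases hq : q ∈ s
  · have := congrFun h ⟨q, hq⟩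
    simpa using congrArg Fin.val this
  · rw [m1.2.1 q hq, m2.2.1 q hq]

lemma sum_range_ext {M : Type*} [AddCommMonoid M] (g : ℕ → M) {a b : ℕ} (h : a ≤ b)
    (hz : ∀ k, a ≤ k → k < b → g k = 0) : ∑ k ∈ Finset.range b, g k = ∑ k ∈ Finset.range a, g k := by
  refine (Finset.sum_subset (Finset.range_subset_range.2 h) ?_).symm
  intro k hk hk'
  rw [Finset.mem_range] at hk
  rw [Finset.mem_range, not_lt] at hk'
  exact hz k hk' hk

lemma sum_range_split {M : Type*} [AddCommMonoid M] (g : ℕ → M) {a b : ℕ} (h : a ≤ b) :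
    ∑ k ∈ Finset.range b, g k = ∑ k ∈ Finset.range a, g k + ∑ k ∈ Finset.Ico a b, g k := by
  simp only [Finset.range_eq_Ico]
  exact (Finset.sum_Ico_consecutive _ (Nat.zero_le a) h).symm

lemma sum_Ico_top {M : Type*} [AddCommMonoid M] (g : ℕ → M) {a b : ℕ} (h : a ≤ b - 1)
    (hb : 1 ≤ b) :
    ∑ k ∈ Finset.Ico a b, g k = ∑ k ∈ Finset.Ico a (b - 1), g k + g (b - 1) := by
  conv_lhs => rw [show b = (b - 1) + 1 by omega]
  rw [Finset.sum_Ico_succ_top h]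

lemma sum_Phi_eq (η : List ℕ) {m : ℕ × ℕ → ℕ} (hs : ∀ p, p ∉ Phi η → m p = 0) :
    ∑ p ∈ Phi η, m p = ∑ j ∈ Finset.range η.sum, ∑ i ∈ Finset.range η.sum, m (i, j) := by
  rw [← Finset.sum_product_right]
  exact Finset.sum_subset
    (fun q hq => by
      rw [Finset.mem_product]
      have h := ((mem_Phi η q).1 hq).1
      exact ⟨Finset.mem_range.2 h.1, Finset.mem_range.2 h.2⟩)
    (fun x _ hx => hs x hx)

lemma heq_subtype_family {ι : Type*} {F : Type*} (Q : ι → F → Prop) {x y : ι} (h : x = y)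
    (u : {f // Q x f}) (v : {f // Q y f}) (huv : u.1 = v.1) : HEq u v := by
  subst h; exact heq_of_eq (Subtype.ext huv)

/-- Recurrence stripping the last part of the composition: for `γ` in the
dominant chamber (`γ_1 ≥ ⋯ ≥ γ_{n−1} ≥ 0`, so `γ_{r+1} = ⋯ = γ_{n−1} = 0` and `γ_n ≤ 0`),
`K_{Φ(η)}(γ|q) = q^{−γ_n} Σ_{β ∈ ℤ_{≥0}^r, |β| = −γ_n} K_{Φ(η̃)}(γ − β | q)`;
stated coefficient-wise in `q`. -/
theorem stmt10 (η : List ℕ) (hp : 2 ≤ η.length) (hpos : ∀ x ∈ η, 0 < x)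
    (γ : ℕ → ℤ) (h0 : ∑ i ∈ Finset.range η.sum, γ i = 0)
    (hdom : ∀ i j, i ≤ j → j ≤ η.sum - 2 → γ j ≤ γ i)
    (hnn : 0 ≤ γ (η.sum - 2)) (d : ℕ) :
    KCoeff η γ d =
      if (-(γ (η.sum - 1))).toNat ≤ d then
        ∑ β ∈ Finset.Nat.antidiagonalTuple η.dropLast.sum (-(γ (η.sum - 1))).toNat,
          KCoeff η.dropLast
            (fun i => γ i - (if hi : i < η.dropLast.sum then (β ⟨i, hi⟩ : ℤ) else 0))
            (d - (-(γ (η.sum - 1))).toNat)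
      else 0 := by
  classical
  have hη : η ≠ [] := by intro h; rw [h] at hp; simp at hp
  have hg : 0 < η.getLast hη := hpos _ (List.getLast_mem hη)
  have hnr' : η.dropLast.sum + η.getLast hη = η.sum := by
    conv_rhs => rw [← List.dropLast_append_getLast hη]
    rw [List.sum_append]; simp
  have hrn : η.dropLast.sum < η.sum := by omega
  have hdl : η.dropLast ≠ [] := by
    have h1 : η.dropLast.length = η.length - 1 := List.length_dropLast
    intro h; rw [h] at h1; simp at h1; omega
  have hr1 : 1 ≤ η.dropLast.sum := by
    by_contra h
    have h0' : η.dropLast.sum = 0 := by omega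
    have h1 := (List.sum_eq_zero_iff).1 h0' _ (List.head_mem hdl)
    have h2 := hpos _ (List.mem_of_mem_dropLast (List.head_mem hdl))
    omega
  have hn2 : 2 ≤ η.sum := by omega
  have hγnn : ∀ i, i ≤ η.sum - 2 → 0 ≤ γ i := fun i hi => le_trans hnn (hdom i _ hi le_rfl)
  have hγsum : ∑ i ∈ Finset.range (η.sum - 1), γ i + γ (η.sum - 1) = 0 := by
    rw [← Finset.sum_range_succ]
    rw [show η.sum - 1 + 1 = η.sum by omega]
    exact h0
  have hγnnsum : 0 ≤ ∑ i ∈ Finset.range (η.sum - 1), γ i :=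
    Finset.sum_nonneg fun i hi => hγnn i (by have := Finset.mem_range.1 hi; omega)
  have hcast : ((-(γ (η.sum - 1))).toNat : ℤ) = -(γ (η.sum - 1)) :=
    Int.toNat_of_nonneg (by omega)
  -- vanishing lemmas for arrays supported on `Phi η`
  have z1 : ∀ m : ℕ × ℕ → ℕ, (∀ p, p ∉ Phi η → m p = 0) →
      ∀ i j, η.dropLast.sum ≤ i → m (i, j) = 0 := by
    intro m hs i j hi
    refine hs (i, j) (fun hmem => ?_)
    have h1 : i < η.dropLast.sum := Phi_fst_lt hp hmem
    omega
  have z4 : ∀ m : ℕ × ℕ → ℕ, (∀ p, p ∉ Phi η → m p = 0) →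
      ∀ i j, η.sum ≤ j → m (i, j) = 0 := by
    intro m hs i j hj
    refine hs (i, j) (fun hmem => ?_)
    have h1 : j < η.sum := ((mem_Phi η (i, j)).1 hmem).1.2
    omega
  have z1' : ∀ m : ℕ × ℕ → ℕ, (∀ p, p ∉ Phi η.dropLast → m p = 0) →
      ∀ i j, η.dropLast.sum ≤ i ∨ η.dropLast.sum ≤ j → m (i, j) = 0 := by
    intro m hs i j hij
    refine hs (i, j) (fun hmem => ?_)
    have h1 : i < η.dropLast.sum := ((mem_Phi η.dropLast (i, j)).1 hmem).1.1
    have h2 : j < η.dropLast.sum := ((mem_Phi η.dropLast (i, j)).1 hmem).1.2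
    omega
  have z2 : ∀ m : ℕ × ℕ → ℕ, (∀ p, p ∉ Phi η → m p = 0) →
      (∀ i ∈ Finset.range η.sum,
        (∑ j ∈ Finset.range η.sum, (m (i, j) : ℤ)) -
          (∑ j ∈ Finset.range η.sum, (m (j, i) : ℤ)) = γ i) →
      ∀ i j, η.dropLast.sum ≤ j → j < η.sum - 1 → m (i, j) = 0 := by
    intro m hs hrow i j hj1 hj2
    have h := hrow j (Finset.mem_range.2 (by omega))
    have h1 : ∑ k ∈ Finset.range η.sum, (m (j, k) : ℤ) = 0 :=
      Finset.sum_eq_zero fun k _ => by rw [z1 m hs j k hj1]; norm_num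
    have h3 : ∀ k ∈ Finset.range η.sum, (0 : ℤ) ≤ (m (k, j) : ℤ) := fun k _ => by positivity
    have h2 : ∑ k ∈ Finset.range η.sum, (m (k, j) : ℤ) = 0 := by
      have h4 := Finset.sum_nonneg h3
      have h5 := hγnn j (by omega)
      rw [h1] at h
      linarith
    have hall := (Finset.sum_eq_zero_iff_of_nonneg h3).1 h2
    by_cases hi : i < η.sum
    · exact_mod_cast hall i (Finset.mem_range.2 hi)
    · refine hs (i, j) fun hmem => ?_
      have h6 : i < η.sum := ((mem_Phi η (i, j)).1 hmem).1.1
      omega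
  have z5 : ∀ m : ℕ × ℕ → ℕ, (∀ p, p ∉ Phi η → m p = 0) →
      (∀ i ∈ Finset.range η.sum,
        (∑ j ∈ Finset.range η.sum, (m (i, j) : ℤ)) -
          (∑ j ∈ Finset.range η.sum, (m (j, i) : ℤ)) = γ i) →
      ∑ k ∈ Finset.range η.dropLast.sum, m (k, η.sum - 1) = (-(γ (η.sum - 1))).toNat := by
    intro m hs hrow
    have h := hrow (η.sum - 1) (Finset.mem_range.2 (by omega))
    have h1 : ∑ k ∈ Finset.range η.sum, (m (η.sum - 1, k) : ℤ) = 0 :=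
      Finset.sum_eq_zero fun k _ => by rw [z1 m hs _ k (by omega)]; norm_num
    have h2 : ∑ k ∈ Finset.range η.sum, (m (k, η.sum - 1) : ℤ)
        = ((-(γ (η.sum - 1))).toNat : ℤ) := by
      rw [hcast]; rw [h1] at h; linarith
    have h3 : ∑ k ∈ Finset.range η.sum, (m (k, η.sum - 1) : ℤ)
        = ∑ k ∈ Finset.range η.dropLast.sum, (m (k, η.sum - 1) : ℤ) :=
      sum_range_ext _ (le_of_lt hrn) (fun k hk _ => by rw [z1 m hs k _ hk]; norm_num)
    have h4 : ((∑ k ∈ Finset.range η.dropLast.sum, m (k, η.sum - 1) : ℕ) : ℤ)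
        = ((-(γ (η.sum - 1))).toNat : ℤ) := by
      rw [Nat.cast_sum, ← h3, h2]
    exact_mod_cast h4
  by_cases hcd : (-(γ (η.sum - 1))).toNat ≤ d
  · rw [if_pos hcd]
    -- the total charge of the `β`-column of any `b ∈ T`
    have hbsum : ∀ b : Fin η.dropLast.sum → ℕ,
        b ∈ Finset.Nat.antidiagonalTuple η.dropLast.sum (-(γ (η.sum - 1))).toNat →
        ∑ k ∈ Finset.range η.dropLast.sum,
          (if hk : k < η.dropLast.sum then (b ⟨k, hk⟩ : ℕ) else 0)
          = (-(γ (η.sum - 1))).toNat := by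
      intro b hb
      have h1 := Finset.Nat.mem_antidiagonalTuple.1 hb
      rw [← Fin.sum_univ_eq_sum_range
        (fun k => if hk : k < η.dropLast.sum then (b ⟨k, hk⟩ : ℕ) else 0) η.dropLast.sum]
      rw [← h1]
      refine Finset.sum_congr rfl fun k _ => ?_
      rw [dif_pos k.2]
    -- forward obligations
    have fwd_mem : ∀ m : ℕ × ℕ → ℕ, (∀ p, p ∉ Phi η → m p = 0) →
        (∀ i ∈ Finset.range η.sum,
          (∑ j ∈ Finset.range η.sum, (m (i, j) : ℤ)) -
            (∑ j ∈ Finset.range η.sum, (m (j, i) : ℤ)) = γ i) →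
        (fun k : Fin η.dropLast.sum => m (↑k, η.sum - 1)) ∈
          Finset.Nat.antidiagonalTuple η.dropLast.sum (-(γ (η.sum - 1))).toNat := by
      intro m hs hrow
      rw [Finset.Nat.mem_antidiagonalTuple]
      rw [Fin.sum_univ_eq_sum_range (fun k => m (k, η.sum - 1)) η.dropLast.sum]
      exact z5 m hs hrow
    have fwd_supp : ∀ m : ℕ × ℕ → ℕ, (∀ p, p ∉ Phi η → m p = 0) →
        ∀ q : ℕ × ℕ, q ∉ Phi η.dropLast →
          (if q.2 < η.dropLast.sum then m q else 0) = 0 := by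
      rintro m hs ⟨i, j⟩ hq
      dsimp only
      split_ifs with h
      · refine hs (i, j) fun hmem => ?_
        rcases (mem_Phi_iff η hp i j).1 hmem with ⟨h1, _⟩ | ⟨_, h2, _⟩
        · exact hq h1
        · omega
      · rfl
    have fwd_rows : ∀ m : ℕ × ℕ → ℕ, (∀ p, p ∉ Phi η → m p = 0) →
        (∀ i ∈ Finset.range η.sum,
          (∑ j ∈ Finset.range η.sum, (m (i, j) : ℤ)) -
            (∑ j ∈ Finset.range η.sum, (m (j, i) : ℤ)) = γ i) →
        ∀ i ∈ Finset.range η.dropLast.sum,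
          (∑ j ∈ Finset.range η.dropLast.sum,
            ((if j < η.dropLast.sum then m (i, j) else 0 : ℕ) : ℤ)) -
          (∑ j ∈ Finset.range η.dropLast.sum,
            ((if i < η.dropLast.sum then m (j, i) else 0 : ℕ) : ℤ))
          = γ i - (if hi : i < η.dropLast.sum then ((m (i, η.sum - 1) : ℕ) : ℤ) else 0) := by
      intro m hs hrow i hi0
      have hi : i < η.dropLast.sum := Finset.mem_range.1 hi0
      rw [dif_pos hi]
      have h := hrow i (Finset.mem_range.2 (by omega))
      have e1 : ∑ j ∈ Finset.range η.dropLast.sum,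
          ((if j < η.dropLast.sum then m (i, j) else 0 : ℕ) : ℤ)
          = ∑ j ∈ Finset.range η.dropLast.sum, (m (i, j) : ℤ) :=
        Finset.sum_congr rfl fun j hj => by rw [if_pos (Finset.mem_range.1 hj)]
      have e2 : ∑ j ∈ Finset.range η.dropLast.sum,
          ((if i < η.dropLast.sum then m (j, i) else 0 : ℕ) : ℤ)
          = ∑ j ∈ Finset.range η.dropLast.sum, (m (j, i) : ℤ) :=
        Finset.sum_congr rfl fun j hj => by rw [if_pos hi]
      have e3 : ∑ j ∈ Finset.range η.sum, (m (i, j) : ℤ)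
          = ∑ j ∈ Finset.range η.dropLast.sum, (m (i, j) : ℤ) + (m (i, η.sum - 1) : ℤ) := by
        rw [sum_range_split (fun j => (m (i, j) : ℤ)) (le_of_lt hrn),
          sum_Ico_top (fun j => (m (i, j) : ℤ)) (by omega : η.dropLast.sum ≤ η.sum - 1)
            (by omega)]
        have hmid : ∑ j ∈ Finset.Ico η.dropLast.sum (η.sum - 1), (m (i, j) : ℤ) = 0 :=
          Finset.sum_eq_zero fun j hj => by
            rw [z2 m hs hrow i j (Finset.mem_Ico.1 hj).1 (Finset.mem_Ico.1 hj).2]; norm_num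
        rw [hmid]; ring
      have e4 : ∑ j ∈ Finset.range η.sum, (m (j, i) : ℤ)
          = ∑ j ∈ Finset.range η.dropLast.sum, (m (j, i) : ℤ) :=
        sum_range_ext _ (le_of_lt hrn) fun k hk _ => by rw [z1 m hs k i hk]; norm_num
      rw [e1, e2]
      rw [e3, e4] at h
      linarith
    have fwd_tot : ∀ m : ℕ × ℕ → ℕ, (∀ p, p ∉ Phi η → m p = 0) →
        (∀ i ∈ Finset.range η.sum,
          (∑ j ∈ Finset.range η.sum, (m (i, j) : ℤ)) -
            (∑ j ∈ Finset.range η.sum, (m (j, i) : ℤ)) = γ i) →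
        (∑ p ∈ Phi η, m p) = d →
        (∑ p ∈ Phi η.dropLast, (if p.2 < η.dropLast.sum then m p else 0))
          = d - (-(γ (η.sum - 1))).toNat := by
      intro m hs hrow htot
      rw [sum_Phi_eq η.dropLast (fwd_supp m hs)]
      have e0 : ∑ j ∈ Finset.range η.dropLast.sum, ∑ i ∈ Finset.range η.dropLast.sum,
            (if ((i, j) : ℕ × ℕ).2 < η.dropLast.sum then m (i, j) else 0)
          = ∑ j ∈ Finset.range η.dropLast.sum, ∑ i ∈ Finset.range η.sum, m (i, j) := by
        refine Finset.sum_congr rfl fun j hj => ?_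
        have hj' : j < η.dropLast.sum := Finset.mem_range.1 hj
        rw [show (∑ i ∈ Finset.range η.dropLast.sum,
            (if ((i, j) : ℕ × ℕ).2 < η.dropLast.sum then m (i, j) else 0))
            = ∑ i ∈ Finset.range η.dropLast.sum, m (i, j) from
          Finset.sum_congr rfl fun i _ => if_pos hj']
        exact (sum_range_ext (fun i => m (i, j)) (le_of_lt hrn)
          (fun k hk _ => z1 m hs k j hk)).symm
      rw [e0]
      have hsplit := sum_range_split (fun j => ∑ i ∈ Finset.range η.sum, m (i, j))
        (le_of_lt hrn)
      have htop := sum_Ico_top (fun j => ∑ i ∈ Finset.range η.sum, m (i, j))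
        (show η.dropLast.sum ≤ η.sum - 1 by omega) (by omega)
      have hmid : ∑ j ∈ Finset.Ico η.dropLast.sum (η.sum - 1),
          (∑ i ∈ Finset.range η.sum, m (i, j)) = 0 :=
        Finset.sum_eq_zero fun j hj => Finset.sum_eq_zero fun i _ =>
          z2 m hs hrow i j (Finset.mem_Ico.1 hj).1 (Finset.mem_Ico.1 hj).2
      have hlastcol : ∑ i ∈ Finset.range η.sum, m (i, η.sum - 1)
          = (-(γ (η.sum - 1))).toNat := by
        rw [sum_range_ext (fun i => m (i, η.sum - 1)) (le_of_lt hrn)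
          (fun k hk _ => z1 m hs k _ hk)]
        exact z5 m hs hrow
      have htot2 : ∑ j ∈ Finset.range η.sum, (∑ i ∈ Finset.range η.sum, m (i, j)) = d := by
        rw [← sum_Phi_eq η hs]; exact htot
      omega
    -- backward obligations
    have bwd_supp : ∀ (b : Fin η.dropLast.sum → ℕ) (mt : ℕ × ℕ → ℕ),
        (∀ p, p ∉ Phi η.dropLast → mt p = 0) →
        ∀ q : ℕ × ℕ, q ∉ Phi η →
          (mt q + if h : q.1 < η.dropLast.sum ∧ q.2 = η.sum - 1 then b ⟨q.1, h.1⟩ else 0)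
            = 0 := by
      rintro b mt hs' ⟨i, j⟩ hq
      dsimp only
      have h1 : mt (i, j) = 0 := hs' (i, j) fun hmem => hq (Phi_dropLast_subset hp hmem)
      rw [h1]
      split_ifs with h
      · exfalso
        exact hq ((mem_Phi_iff η hp i j).2 (Or.inr ⟨h.1, by omega, by omega⟩))
      · rfl
    have colM : ∀ (b : Fin η.dropLast.sum → ℕ),
        b ∈ Finset.Nat.antidiagonalTuple η.dropLast.sum (-(γ (η.sum - 1))).toNat →
        ∀ (mt : ℕ × ℕ → ℕ), (∀ p, p ∉ Phi η.dropLast → mt p = 0) →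
        ∀ t, ∑ x ∈ Finset.range η.sum,
            (mt (x, t) + if h : x < η.dropLast.sum ∧ t = η.sum - 1 then b ⟨x, h.1⟩ else 0)
          = (∑ x ∈ Finset.range η.dropLast.sum, mt (x, t))
            + (if t = η.sum - 1 then (-(γ (η.sum - 1))).toNat else 0) := by
      intro b hb mt hs' t
      rw [Finset.sum_add_distrib]
      congr 1
      · exact sum_range_ext (fun x => mt (x, t)) (le_of_lt hrn)
          fun k hk _ => z1' mt hs' k t (Or.inl hk)
      · by_cases h4 : t = η.sum - 1
        · rw [if_pos h4]
          have h2 : ∀ x, (if h : x < η.dropLast.sum ∧ t = η.sum - 1 then (b ⟨x, h.1⟩ : ℕ) else 0)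
              = (if hk : x < η.dropLast.sum then (b ⟨x, hk⟩ : ℕ) else 0) := fun x => by
            by_cases h3 : x < η.dropLast.sum <;> simp [h3, h4]
          rw [Finset.sum_congr rfl fun x _ => h2 x]
          rw [sum_range_ext (fun x => if hk : x < η.dropLast.sum then (b ⟨x, hk⟩ : ℕ) else 0)
            (le_of_lt hrn) (fun k hk _ => dif_neg (by omega))]
          exact hbsum b hb
        · rw [if_neg h4]
          exact Finset.sum_eq_zero fun x _ => dif_neg (by rintro ⟨-, h5⟩; exact h4 h5)
    have bwd_rows : ∀ (b : Fin η.dropLast.sum → ℕ),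
        b ∈ Finset.Nat.antidiagonalTuple η.dropLast.sum (-(γ (η.sum - 1))).toNat →
        ∀ (mt : ℕ × ℕ → ℕ), (∀ p, p ∉ Phi η.dropLast → mt p = 0) →
        (∀ i ∈ Finset.range η.dropLast.sum,
          (∑ j ∈ Finset.range η.dropLast.sum, (mt (i, j) : ℤ)) -
            (∑ j ∈ Finset.range η.dropLast.sum, (mt (j, i) : ℤ)) =
            γ i - (if hi : i < η.dropLast.sum then (b ⟨i, hi⟩ : ℤ) else 0)) →
        ∀ i ∈ Finset.range η.sum,
          (∑ j ∈ Finset.range η.sum,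
            ((mt (i, j) + if h : i < η.dropLast.sum ∧ j = η.sum - 1 then b ⟨i, h.1⟩ else 0 : ℕ) : ℤ)) -
          (∑ j ∈ Finset.range η.sum,
            ((mt (j, i) + if h : j < η.dropLast.sum ∧ i = η.sum - 1 then b ⟨j, h.1⟩ else 0 : ℕ) : ℤ))
          = γ i := by
      intro b hb mt hs' hrow' i hi0
      have hi : i < η.sum := Finset.mem_range.1 hi0
      have hrowM : ∑ x ∈ Finset.range η.sum,
          (mt (i, x) + if h : i < η.dropLast.sum ∧ x = η.sum - 1 then b ⟨i, h.1⟩ else 0)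
          = (∑ x ∈ Finset.range η.dropLast.sum, mt (i, x))
            + (if hk : i < η.dropLast.sum then (b ⟨i, hk⟩ : ℕ) else 0) := by
        rw [Finset.sum_add_distrib]
        congr 1
        · exact sum_range_ext (fun x => mt (i, x)) (le_of_lt hrn)
            fun k hk _ => z1' mt hs' i k (Or.inr hk)
        · have h2 : ∀ x, (if h : i < η.dropLast.sum ∧ x = η.sum - 1 then (b ⟨i, h.1⟩ : ℕ) else 0)
              = if x = η.sum - 1 then (if hk : i < η.dropLast.sum then (b ⟨i, hk⟩ : ℕ) else 0)
                else 0 := fun x => by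
            by_cases h3 : i < η.dropLast.sum <;> by_cases h4 : x = η.sum - 1 <;> simp [h3, h4]
          rw [Finset.sum_congr rfl fun x _ => h2 x,
            Finset.sum_ite_eq' (Finset.range η.sum) (η.sum - 1)]
          rw [if_pos (Finset.mem_range.2 (by omega))]
      have hcolM := colM b hb mt hs' i
      have hA : ∑ j ∈ Finset.range η.sum,
          ((mt (i, j) + if h : i < η.dropLast.sum ∧ j = η.sum - 1 then b ⟨i, h.1⟩ else 0 : ℕ) : ℤ)
          = (((∑ x ∈ Finset.range η.dropLast.sum, mt (i, x))
            + (if hk : i < η.dropLast.sum then (b ⟨i, hk⟩ : ℕ) else 0) : ℕ) : ℤ) := by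
        rw [← Nat.cast_sum, hrowM]
      have hB : ∑ j ∈ Finset.range η.sum,
          ((mt (j, i) + if h : j < η.dropLast.sum ∧ i = η.sum - 1 then b ⟨j, h.1⟩ else 0 : ℕ) : ℤ)
          = (((∑ x ∈ Finset.range η.dropLast.sum, mt (x, i))
            + (if i = η.sum - 1 then (-(γ (η.sum - 1))).toNat else 0) : ℕ) : ℤ) := by
        rw [← Nat.cast_sum, hcolM]
      rw [hA, hB]
      push_cast
      rcases Nat.lt_or_ge i η.dropLast.sum with hir | hir
      · have h := hrow' i (Finset.mem_range.2 hir)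
        rw [dif_pos hir] at h
        rw [dif_pos hir, if_neg (show ¬ i = η.sum - 1 by omega)]
        linarith
      · have hA0 : ∑ x ∈ Finset.range η.dropLast.sum, (mt (i, x) : ℤ) = 0 :=
          Finset.sum_eq_zero fun x _ => by rw [z1' mt hs' i x (Or.inl hir)]; norm_num
        have hB0 : ∑ x ∈ Finset.range η.dropLast.sum, (mt (x, i) : ℤ) = 0 :=
          Finset.sum_eq_zero fun x _ => by rw [z1' mt hs' x i (Or.inr hir)]; norm_num
        rw [hA0, hB0, dif_neg (show ¬ i < η.dropLast.sum by omega)]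
        rcases eq_or_ne i (η.sum - 1) with he | hne
        · rw [he, if_pos rfl, hcast]
          push_cast
          ring
        · rw [if_neg hne]
          -- here `γ i = 0` since the `γ`-weight on `[r, n-1)` vanishes
          have hγr : ∑ k ∈ Finset.range η.dropLast.sum, γ k
              = ((-(γ (η.sum - 1))).toNat : ℤ) := by
            have h1 : ∑ k ∈ Finset.range η.dropLast.sum,
                ((∑ j ∈ Finset.range η.dropLast.sum, (mt (k, j) : ℤ)) -
                  (∑ j ∈ Finset.range η.dropLast.sum, (mt (j, k) : ℤ))) = 0 := by
              rw [Finset.sum_sub_distrib, Finset.sum_comm]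
              ring
            have h2 : ∑ k ∈ Finset.range η.dropLast.sum,
                (γ k - (if hk : k < η.dropLast.sum then (b ⟨k, hk⟩ : ℤ) else 0)) = 0 := by
              have h6 := Finset.sum_congr rfl (fun k hk => (hrow' k hk).symm)
              exact h6.trans h1
            have h3 : ∑ k ∈ Finset.range η.dropLast.sum,
                (if hk : k < η.dropLast.sum then ((b ⟨k, hk⟩ : ℕ) : ℤ) else 0)
                = ((-(γ (η.sum - 1))).toNat : ℤ) := by
              have h4 : ∀ k, (if hk : k < η.dropLast.sum then ((b ⟨k, hk⟩ : ℕ) : ℤ) else 0)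
                  = (((if hk : k < η.dropLast.sum then (b ⟨k, hk⟩ : ℕ) else 0) : ℕ) : ℤ) :=
                fun k => by by_cases h5 : k < η.dropLast.sum <;> simp [h5]
              rw [Finset.sum_congr rfl fun k _ => h4 k, ← Nat.cast_sum, hbsum b hb]
            rw [Finset.sum_sub_distrib] at h2
            linarith
          have h5 : ∑ k ∈ Finset.range (η.sum - 1), γ k
              = ((-(γ (η.sum - 1))).toNat : ℤ) := by
            rw [hcast]; linarith
          have h6 := sum_range_split γ (show η.dropLast.sum ≤ η.sum - 1 by omega)
          have h7 : ∑ k ∈ Finset.Ico η.dropLast.sum (η.sum - 1), γ k = 0 := by linarith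
          have h8 := (Finset.sum_eq_zero_iff_of_nonneg
            (fun x hx => hγnn x (by have := Finset.mem_Ico.1 hx; omega))).1 h7
          have h9 : γ i = 0 := h8 i (Finset.mem_Ico.2 ⟨hir, by omega⟩)
          rw [h9]
          norm_num
    have bwd_tot : ∀ (b : Fin η.dropLast.sum → ℕ),
        b ∈ Finset.Nat.antidiagonalTuple η.dropLast.sum (-(γ (η.sum - 1))).toNat →
        ∀ (mt : ℕ × ℕ → ℕ), (∀ p, p ∉ Phi η.dropLast → mt p = 0) →
        (∑ p ∈ Phi η.dropLast, mt p) = d - (-(γ (η.sum - 1))).toNat →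
        (∑ p ∈ Phi η,
          (mt p + if h : p.1 < η.dropLast.sum ∧ p.2 = η.sum - 1 then b ⟨p.1, h.1⟩ else 0)) = d := by
      intro b hb mt hs' htot'
      rw [sum_Phi_eq η (bwd_supp b mt hs')]
      have e0 : ∀ j ∈ Finset.range η.sum, ∑ i ∈ Finset.range η.sum,
            (mt ((i, j) : ℕ × ℕ) +
              if h : ((i, j) : ℕ × ℕ).1 < η.dropLast.sum ∧ ((i, j) : ℕ × ℕ).2 = η.sum - 1
                then b ⟨((i, j) : ℕ × ℕ).1, h.1⟩ else 0)
          = (∑ x ∈ Finset.range η.dropLast.sum, mt (x, j))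
            + (if j = η.sum - 1 then (-(γ (η.sum - 1))).toNat else 0) :=
        fun j _ => colM b hb mt hs' j
      rw [Finset.sum_congr rfl e0, Finset.sum_add_distrib]
      have e1 : ∑ j ∈ Finset.range η.sum, ∑ x ∈ Finset.range η.dropLast.sum, mt (x, j)
          = d - (-(γ (η.sum - 1))).toNat := by
        rw [sum_range_ext (fun j => ∑ x ∈ Finset.range η.dropLast.sum, mt (x, j))
          (le_of_lt hrn)
          (fun k hk _ => Finset.sum_eq_zero fun x _ => z1' mt hs' x k (Or.inr hk))]
        rw [← htot', sum_Phi_eq η.dropLast hs']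
      have e2 : ∑ j ∈ Finset.range η.sum,
          (if j = η.sum - 1 then (-(γ (η.sum - 1))).toNat else 0)
          = (-(γ (η.sum - 1))).toNat := by
        rw [Finset.sum_ite_eq' (Finset.range η.sum) (η.sum - 1)]
        rw [if_pos (Finset.mem_range.2 (by omega))]
      rw [e1, e2]
      omega
    -- the bijection
    have hNE : Nonempty
        ({m : ℕ × ℕ → ℕ //
          (∀ p, p ∉ Phi η → m p = 0) ∧
          (∀ i ∈ Finset.range η.sum,
            (∑ j ∈ Finset.range η.sum, (m (i, j) : ℤ)) -
              (∑ j ∈ Finset.range η.sum, (m (j, i) : ℤ)) = γ i) ∧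
          (∑ p ∈ Phi η, m p) = d} ≃
        (bT : {x : Fin η.dropLast.sum → ℕ //
            x ∈ Finset.Nat.antidiagonalTuple η.dropLast.sum (-(γ (η.sum - 1))).toNat}) ×
          {m : ℕ × ℕ → ℕ //
            (∀ p, p ∉ Phi η.dropLast → m p = 0) ∧
            (∀ i ∈ Finset.range η.dropLast.sum,
              (∑ j ∈ Finset.range η.dropLast.sum, (m (i, j) : ℤ)) -
                (∑ j ∈ Finset.range η.dropLast.sum, (m (j, i) : ℤ)) =
                γ i - (if hi : i < η.dropLast.sum then (bT.1 ⟨i, hi⟩ : ℤ) else 0)) ∧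
            (∑ p ∈ Phi η.dropLast, m p) = d - (-(γ (η.sum - 1))).toNat}) := by
      refine ⟨{
        toFun := fun m => ⟨⟨fun k => m.1 (↑k, η.sum - 1), fwd_mem m.1 m.2.1 m.2.2.1⟩,
          ⟨fun q => if q.2 < η.dropLast.sum then m.1 q else 0,
            fwd_supp m.1 m.2.1, fwd_rows m.1 m.2.1 m.2.2.1,
            fwd_tot m.1 m.2.1 m.2.2.1 m.2.2.2⟩⟩
        invFun := fun x =>
          ⟨fun q => x.2.1 q +
              if h : q.1 < η.dropLast.sum ∧ q.2 = η.sum - 1 then x.1.1 ⟨q.1, h.1⟩ else 0,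
            bwd_supp x.1.1 x.2.1 x.2.2.1,
            bwd_rows x.1.1 x.1.2 x.2.1 x.2.2.1 x.2.2.2.1,
            bwd_tot x.1.1 x.1.2 x.2.1 x.2.2.1 x.2.2.2.2⟩
        left_inv := ?_
        right_inv := ?_ }⟩
      · rintro ⟨mv, hs, hrow, htot⟩
        apply Subtype.ext
        funext q
        obtain ⟨i, j⟩ := q
        show (if j < η.dropLast.sum then mv (i, j) else 0) +
            (if h : i < η.dropLast.sum ∧ j = η.sum - 1 then mv (i, η.sum - 1) else 0)
            = mv (i, j)
        by_cases h1 : j < η.dropLast.sum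
        · rw [if_pos h1, dif_neg (by rintro ⟨-, h2⟩; omega), add_zero]
        · rw [if_neg h1]
          by_cases h2 : i < η.dropLast.sum ∧ j = η.sum - 1
          · rw [dif_pos h2, h2.2, zero_add]
          · rw [dif_neg h2, add_zero]
            symm
            rcases Nat.lt_or_ge j η.sum with h4 | h4
            · rcases eq_or_ne j (η.sum - 1) with h5 | h5
              · have h6 : ¬ i < η.dropLast.sum := fun h7 => h2 ⟨h7, h5⟩
                exact z1 mv hs i j (by omega)
              · exact z2 mv hs hrow i j (by omega) (by omega)
            · exact z4 mv hs i j h4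
      · rintro ⟨⟨b, hbT⟩, mt, hs', hrow', htot'⟩
        have hβ : (fun k : Fin η.dropLast.sum =>
            (mt (↑k, η.sum - 1) +
              if h : (k : ℕ) < η.dropLast.sum ∧ η.sum - 1 = η.sum - 1 then b ⟨↑k, h.1⟩ else 0))
            = b := by
          funext k
          rw [z1' mt hs' ↑k (η.sum - 1) (Or.inr (by omega)), dif_pos ⟨k.2, rfl⟩, zero_add]
        have hm : (fun q : ℕ × ℕ =>
            if q.2 < η.dropLast.sum then
              (mt q + if h : q.1 < η.dropLast.sum ∧ q.2 = η.sum - 1 then b ⟨q.1, h.1⟩ else 0)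
            else 0) = mt := by
          funext q
          obtain ⟨i, j⟩ := q
          show (if j < η.dropLast.sum then
              (mt (i, j) + if h : i < η.dropLast.sum ∧ j = η.sum - 1 then b ⟨i, h.1⟩ else 0)
            else 0) = mt (i, j)
          by_cases h1 : j < η.dropLast.sum
          · rw [if_pos h1, dif_neg (by rintro ⟨-, h2⟩; omega), add_zero]
          · rw [if_neg h1]
            exact (z1' mt hs' i j (Or.inr (by omega))).symm
        refine Sigma.ext (Subtype.ext hβ) ?_
        refine heq_subtype_family
          (fun (bT : {x : Fin η.dropLast.sum → ℕ //
              x ∈ Finset.Nat.antidiagonalTuple η.dropLast.sum (-(γ (η.sum - 1))).toNat})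
            (m : ℕ × ℕ → ℕ) =>
            (∀ p, p ∉ Phi η.dropLast → m p = 0) ∧
            (∀ i ∈ Finset.range η.dropLast.sum,
              (∑ j ∈ Finset.range η.dropLast.sum, (m (i, j) : ℤ)) -
                (∑ j ∈ Finset.range η.dropLast.sum, (m (j, i) : ℤ)) =
                γ i - (if hi : i < η.dropLast.sum then (bT.1 ⟨i, hi⟩ : ℤ) else 0)) ∧
            (∑ p ∈ Phi η.dropLast, m p) = d - (-(γ (η.sum - 1))).toNat)
          (Subtype.ext hβ) _ _ hm
    obtain ⟨e⟩ := hNE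
    haveI hFin : ∀ bT : {x : Fin η.dropLast.sum → ℕ //
        x ∈ Finset.Nat.antidiagonalTuple η.dropLast.sum (-(γ (η.sum - 1))).toNat},
        Finite {m : ℕ × ℕ → ℕ //
          (∀ p, p ∉ Phi η.dropLast → m p = 0) ∧
          (∀ i ∈ Finset.range η.dropLast.sum,
            (∑ j ∈ Finset.range η.dropLast.sum, (m (i, j) : ℤ)) -
              (∑ j ∈ Finset.range η.dropLast.sum, (m (j, i) : ℤ)) =
              γ i - (if hi : i < η.dropLast.sum then (bT.1 ⟨i, hi⟩ : ℤ) else 0)) ∧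
          (∑ p ∈ Phi η.dropLast, m p) = d - (-(γ (η.sum - 1))).toNat} :=
      fun bT => finite_K _ _ _
    calc KCoeff η γ d
        = Nat.card ((bT : {x : Fin η.dropLast.sum → ℕ //
            x ∈ Finset.Nat.antidiagonalTuple η.dropLast.sum (-(γ (η.sum - 1))).toNat}) ×
          {m : ℕ × ℕ → ℕ //
            (∀ p, p ∉ Phi η.dropLast → m p = 0) ∧
            (∀ i ∈ Finset.range η.dropLast.sum,
              (∑ j ∈ Finset.range η.dropLast.sum, (m (i, j) : ℤ)) -
                (∑ j ∈ Finset.range η.dropLast.sum, (m (j, i) : ℤ)) =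
                γ i - (if hi : i < η.dropLast.sum then (bT.1 ⟨i, hi⟩ : ℤ) else 0)) ∧
            (∑ p ∈ Phi η.dropLast, m p) = d - (-(γ (η.sum - 1))).toNat}) :=
          Nat.card_congr e
      _ = ∑ bT : {x : Fin η.dropLast.sum → ℕ //
            x ∈ Finset.Nat.antidiagonalTuple η.dropLast.sum (-(γ (η.sum - 1))).toNat},
          Nat.card {m : ℕ × ℕ → ℕ //
            (∀ p, p ∉ Phi η.dropLast → m p = 0) ∧
            (∀ i ∈ Finset.range η.dropLast.sum,
              (∑ j ∈ Finset.range η.dropLast.sum, (m (i, j) : ℤ)) -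
                (∑ j ∈ Finset.range η.dropLast.sum, (m (j, i) : ℤ)) =
                γ i - (if hi : i < η.dropLast.sum then (bT.1 ⟨i, hi⟩ : ℤ) else 0)) ∧
            (∑ p ∈ Phi η.dropLast, m p) = d - (-(γ (η.sum - 1))).toNat} :=
          natCard_sigma _
      _ = ∑ b ∈ Finset.Nat.antidiagonalTuple η.dropLast.sum (-(γ (η.sum - 1))).toNat,
          Nat.card {m : ℕ × ℕ → ℕ //
            (∀ p, p ∉ Phi η.dropLast → m p = 0) ∧
            (∀ i ∈ Finset.range η.dropLast.sum,
              (∑ j ∈ Finset.range η.dropLast.sum, (m (i, j) : ℤ)) -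
                (∑ j ∈ Finset.range η.dropLast.sum, (m (j, i) : ℤ)) =
                γ i - (if hi : i < η.dropLast.sum then (b ⟨i, hi⟩ : ℤ) else 0)) ∧
            (∑ p ∈ Phi η.dropLast, m p) = d - (-(γ (η.sum - 1))).toNat} :=
          Finset.sum_coe_sort _
            (fun b : Fin η.dropLast.sum → ℕ => Nat.card {m : ℕ × ℕ → ℕ //
              (∀ p, p ∉ Phi η.dropLast → m p = 0) ∧
              (∀ i ∈ Finset.range η.dropLast.sum,
                (∑ j ∈ Finset.range η.dropLast.sum, (m (i, j) : ℤ)) -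
                  (∑ j ∈ Finset.range η.dropLast.sum, (m (j, i) : ℤ)) =
                  γ i - (if hi : i < η.dropLast.sum then (b ⟨i, hi⟩ : ℤ) else 0)) ∧
              (∑ p ∈ Phi η.dropLast, m p) = d - (-(γ (η.sum - 1))).toNat})
      _ = _ := rfl
  · rw [if_neg hcd]
    have hE : IsEmpty {m : ℕ × ℕ → ℕ //
        (∀ p, p ∉ Phi η → m p = 0) ∧
        (∀ i ∈ Finset.range η.sum,
          (∑ j ∈ Finset.range η.sum, (m (i, j) : ℤ)) -
            (∑ j ∈ Finset.range η.sum, (m (j, i) : ℤ)) = γ i) ∧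
        (∑ p ∈ Phi η, m p) = d} := by
      constructor
      rintro ⟨m, hs, hrow, htot⟩
      have h5 := z5 m hs hrow
      have hle : ∑ k ∈ Finset.range η.dropLast.sum, m (k, η.sum - 1) ≤ ∑ p ∈ Phi η, m p := by
        rw [sum_Phi_eq η hs]
        calc ∑ k ∈ Finset.range η.dropLast.sum, m (k, η.sum - 1)
            ≤ ∑ k ∈ Finset.range η.sum, m (k, η.sum - 1) :=
              Finset.sum_le_sum_of_subset (Finset.range_subset_range.2 (le_of_lt hrn))
          _ ≤ ∑ j ∈ Finset.range η.sum, ∑ i ∈ Finset.range η.sum, m (i, j) :=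
              Finset.single_le_sum (f := fun j => ∑ i ∈ Finset.range η.sum, m (i, j))
                (fun j _ => Nat.zero_le _) (Finset.mem_range.2 (by omega))
      omega
    exact Nat.card_of_isEmpty
end
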